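/- (Deterministic core of Theorem 5.1) Under the LSPE setup, suppose additionally that Λ̄₁ is a positive semidefinite d×d matrix with ‖Λ̂₁^{−1/2}Λ̄₁Λ̂₁^{−1/2}‖₂ ≤ α; that for every h ∈ {2,…,H}, ‖Λ̂_h^{−1/2}Φ̄_hᵀΦ̄_hΛ̂_h^{−1/2}‖₂ ≤ B_h for reals B_h ≥ 0; and that for every h ∈ {1,…,H}, ξ_hᵀΦ_hΛ̂_h^{−1}Φ_hᵀξ_h ≤ E and λ²·θ_hᵀΛ̂_h^{−1}θ_h ≤ F for reals E, F ≥ 0. Then (θ̂₁ − θ₁)ᵀ·Λ̄₁·(θ̂₁ − θ₁) ≤ 2H·α·Σ_{h=1}^{H} ( ∏_{h′=2}^{h} B_{h′} )·(E + F), where the empty product (h = 1) is 1 and Λ̂^{1/2} denotes the positive semidefinite square root. -/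

import Mathlib

open Matrix

/-- The ridge-regularized covariance matrix `Λ̂ = Φᵀ Φ + λ I`. -/
noncomputable def Lhat {N d : ℕ} (lam : ℝ) (Φ : Matrix (Fin N) (Fin d) ℝ) :
    Matrix (Fin d) (Fin d) ℝ :=
  Φᵀ * Φ + lam • 1

/-- The ℓ₂ operator (spectral) norm of a real matrix, i.e. the operator norm of the induced
linear map between Euclidean spaces. -/
noncomputable def sNorm {m n : ℕ} (A : Matrix (Fin m) (Fin n) ℝ) : ℝ :=
  ‖LinearMap.toContinuousLinearMap (Matrix.toEuclideanLin A)‖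

noncomputable def nv {n : ℕ} (v : Fin n → ℝ) : ℝ :=
  ‖(WithLp.equiv 2 (Fin n → ℝ)).symm v‖

lemma nv_nonneg {n : ℕ} (v : Fin n → ℝ) : 0 ≤ nv v := norm_nonneg _

lemma dot_eq_inner {n : ℕ} (v w : Fin n → ℝ) :
    v ⬝ᵥ w = (inner ℝ ((WithLp.equiv 2 (Fin n → ℝ)).symm v)
      ((WithLp.equiv 2 (Fin n → ℝ)).symm w) : ℝ) := by
  rw [EuclideanSpace.inner_eq_star_dotProduct]
  simp [dotProduct, mul_comm]

lemma nv_sq {n : ℕ} (v : Fin n → ℝ) : v ⬝ᵥ v = nv v ^ 2 := by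
  rw [dot_eq_inner, real_inner_self_eq_norm_sq]; rfl

lemma dot_le_nv {n : ℕ} (v w : Fin n → ℝ) : v ⬝ᵥ w ≤ nv v * nv w := by
  rw [dot_eq_inner]; exact real_inner_le_norm _ _

lemma nv_add_le {n : ℕ} (u v : Fin n → ℝ) : nv (u + v) ≤ nv u + nv v := by
  unfold nv; rw [show (WithLp.equiv 2 (Fin n → ℝ)).symm (u + v)
    = (WithLp.equiv 2 (Fin n → ℝ)).symm u + (WithLp.equiv 2 (Fin n → ℝ)).symm v from rfl]
  exact norm_add_le _ _

lemma nv_sub_le {n : ℕ} (u v : Fin n → ℝ) : nv (u - v) ≤ nv u + nv v := by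
  unfold nv; rw [show (WithLp.equiv 2 (Fin n → ℝ)).symm (u - v)
    = (WithLp.equiv 2 (Fin n → ℝ)).symm u - (WithLp.equiv 2 (Fin n → ℝ)).symm v from rfl]
  exact norm_sub_le _ _

lemma nv_zero {n : ℕ} : nv (0 : Fin n → ℝ) = 0 := by
  unfold nv; rw [show (WithLp.equiv 2 (Fin n → ℝ)).symm 0 = 0 from rfl]; simp

lemma qf_le_sNorm {n : ℕ} (A : Matrix (Fin n) (Fin n) ℝ) (x : Fin n → ℝ) :
    x ⬝ᵥ (A *ᵥ x) ≤ sNorm A * (x ⬝ᵥ x) := by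
  rw [dot_eq_inner, nv_sq]
  rw [show (WithLp.equiv 2 (Fin n → ℝ)).symm (A *ᵥ x)
    = Matrix.toEuclideanLin A ((WithLp.equiv 2 (Fin n → ℝ)).symm x) from rfl]
  calc (inner ℝ ((WithLp.equiv 2 (Fin n → ℝ)).symm x)
        (Matrix.toEuclideanLin A ((WithLp.equiv 2 (Fin n → ℝ)).symm x)) : ℝ)
      ≤ ‖(WithLp.equiv 2 (Fin n → ℝ)).symm x‖ *
        ‖Matrix.toEuclideanLin A ((WithLp.equiv 2 (Fin n → ℝ)).symm x)‖ :=
        real_inner_le_norm _ _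
    _ ≤ ‖(WithLp.equiv 2 (Fin n → ℝ)).symm x‖ *
        (sNorm A * ‖(WithLp.equiv 2 (Fin n → ℝ)).symm x‖) := by
        apply mul_le_mul_of_nonneg_left _ (norm_nonneg _)
        exact (LinearMap.toContinuousLinearMap (Matrix.toEuclideanLin A)).le_opNorm _
    _ = sNorm A * nv x ^ 2 := by unfold nv; ring

lemma lhat_posDef {N d : ℕ} {lam : ℝ} (hlam : 0 < lam) (Φ : Matrix (Fin N) (Fin d) ℝ) :
    (Lhat lam Φ).PosDef := by
  unfold Lhat
  apply Matrix.PosDef.posSemidef_add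
  · rw [← Matrix.conjTranspose_eq_transpose_of_trivial]
    exact Matrix.posSemidef_conjTranspose_mul_self Φ
  · rw [Matrix.smul_one_eq_diagonal]
    exact Matrix.posDef_diagonal_iff.mpr fun _ => hlam

lemma dot_self_mulVec {m n : ℕ} (A : Matrix (Fin m) (Fin n) ℝ) (u : Fin n → ℝ) :
    (A *ᵥ u) ⬝ᵥ (A *ᵥ u) = u ⬝ᵥ ((Aᵀ * A) *ᵥ u) := by
  rw [← Matrix.mulVec_mulVec, Matrix.dotProduct_mulVec u, Matrix.vecMul_transpose]

-- quadratic form conjugation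
lemma qf_conj {d : ℕ} {S M : Matrix (Fin d) (Fin d) ℝ} (hST : Sᵀ = S)
    (hSinv : S⁻¹ * S = 1) (x : Fin d → ℝ) :
    x ⬝ᵥ (M *ᵥ x) = (S *ᵥ x) ⬝ᵥ ((S⁻¹ * M * S⁻¹) *ᵥ (S *ᵥ x)) := by
  have hx : S⁻¹ *ᵥ (S *ᵥ x) = x := by
    rw [Matrix.mulVec_mulVec, hSinv, Matrix.one_mulVec]
  have hSTi : S⁻¹ᵀ = S⁻¹ := by rw [Matrix.transpose_nonsing_inv, hST]
  symm
  calc (S *ᵥ x) ⬝ᵥ ((S⁻¹ * M * S⁻¹) *ᵥ (S *ᵥ x))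
      = (S *ᵥ x) ⬝ᵥ (S⁻¹ *ᵥ ((M * S⁻¹) *ᵥ (S *ᵥ x))) := by
        simp only [Matrix.mulVec_mulVec, Matrix.mul_assoc]
    _ = ((S *ᵥ x) ᵥ* S⁻¹) ⬝ᵥ ((M * S⁻¹) *ᵥ (S *ᵥ x)) := Matrix.dotProduct_mulVec _ _ _
    _ = x ⬝ᵥ (M *ᵥ x) := by
        rw [← Matrix.mulVec_transpose, hSTi, hx]
        simp only [Matrix.mulVec_mulVec]
        rw [Matrix.mul_assoc, hSinv, Matrix.mul_one]

lemma lhat_sym {N d : ℕ} {lam : ℝ} (hlam : 0 < lam) (Φ : Matrix (Fin N) (Fin d) ℝ) :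
    (Lhat lam Φ)ᵀ = Lhat lam Φ := by
  have := (lhat_posDef hlam Φ).isHermitian
  rwa [Matrix.IsHermitian, Matrix.conjTranspose_eq_transpose_of_trivial] at this

lemma lhat_inv_sym {N d : ℕ} {lam : ℝ} (hlam : 0 < lam) (Φ : Matrix (Fin N) (Fin d) ℝ) :
    (Lhat lam Φ)⁻¹ᵀ = (Lhat lam Φ)⁻¹ := by
  rw [Matrix.transpose_nonsing_inv, lhat_sym hlam]

lemma lhat_mul_inv {N d : ℕ} {lam : ℝ} (hlam : 0 < lam) (Φ : Matrix (Fin N) (Fin d) ℝ) :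
    Lhat lam Φ * (Lhat lam Φ)⁻¹ = 1 :=
  Matrix.mul_nonsing_inv _ ((Matrix.isUnit_iff_isUnit_det _).mp (lhat_posDef hlam Φ).isUnit)

lemma lhat_inv_mul {N d : ℕ} {lam : ℝ} (hlam : 0 < lam) (Φ : Matrix (Fin N) (Fin d) ℝ) :
    (Lhat lam Φ)⁻¹ * Lhat lam Φ = 1 :=
  Matrix.nonsing_inv_mul _ ((Matrix.isUnit_iff_isUnit_det _).mp (lhat_posDef hlam Φ).isUnit)

/-- contraction: `Φ Λ̂⁻¹ Φᵀ ⪯ I` as quadratic forms. -/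
lemma contraction {N d : ℕ} {lam : ℝ} (hlam : 0 < lam) (Φ : Matrix (Fin N) (Fin d) ℝ)
    (u : Fin N → ℝ) :
    u ⬝ᵥ ((Φ * (Lhat lam Φ)⁻¹ * Φᵀ) *ᵥ u) ≤ u ⬝ᵥ u := by
  set L := Lhat lam Φ with hL
  set v : Fin d → ℝ := L⁻¹ *ᵥ (Φᵀ *ᵥ u) with hv
  set w : Fin N → ℝ := Φ *ᵥ v with hw
  have hLv : L *ᵥ v = Φᵀ *ᵥ u := by
    rw [hv, Matrix.mulVec_mulVec, lhat_mul_inv hlam, Matrix.one_mulVec]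
  have hid : w ⬝ᵥ w + lam * (v ⬝ᵥ v) = w ⬝ᵥ u := by
    have h1 : v ⬝ᵥ (L *ᵥ v) = v ⬝ᵥ (Φᵀ *ᵥ u) := by rw [hLv]
    have h2 : v ⬝ᵥ (L *ᵥ v) = w ⬝ᵥ w + lam * (v ⬝ᵥ v) := by
      rw [hL, Lhat, Matrix.add_mulVec, dotProduct_add, hw, dot_self_mulVec,
        Matrix.smul_mulVec, Matrix.one_mulVec, dotProduct_smul]
      ring_nf
    have h3 : v ⬝ᵥ (Φᵀ *ᵥ u) = w ⬝ᵥ u := by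
      rw [Matrix.dotProduct_mulVec v, Matrix.vecMul_transpose, hw]
    rw [← h2, h1, h3]
  have hgoal : u ⬝ᵥ ((Φ * L⁻¹ * Φᵀ) *ᵥ u) = w ⬝ᵥ u := by
    have : (Φ * L⁻¹ * Φᵀ) *ᵥ u = Φ *ᵥ v := by
      simp only [hv, Matrix.mulVec_mulVec, Matrix.mul_assoc]
    rw [this, ← hw, dotProduct_comm]
  rw [hgoal]
  have hvv : 0 ≤ v ⬝ᵥ v := by rw [nv_sq]; positivity
  have hw2 : w ⬝ᵥ w ≤ w ⬝ᵥ u := by nlinarith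
  have hcs : w ⬝ᵥ u ≤ nv w * nv u := dot_le_nv w u
  have hww : w ⬝ᵥ w = nv w ^ 2 := nv_sq w
  have huu : u ⬝ᵥ u = nv u ^ 2 := nv_sq u
  rcases le_or_gt (nv w) 0 with h | h
  · have hw0 : nv w = 0 := le_antisymm h (nv_nonneg w)
    calc w ⬝ᵥ u ≤ nv w * nv u := hcs
      _ = 0 := by rw [hw0]; ring
      _ ≤ u ⬝ᵥ u := by rw [huu]; positivity
  · have hle : nv w ≤ nv u := by nlinarith
    calc w ⬝ᵥ u ≤ nv w * nv u := hcs
      _ ≤ nv u * nv u := by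
        exact mul_le_mul_of_nonneg_right hle (nv_nonneg u)
      _ = u ⬝ᵥ u := by rw [huu]; ring

lemma nv_smul {n : ℕ} (c : ℝ) (v : Fin n → ℝ) : nv (c • v) = |c| * nv v := by
  unfold nv
  rw [show (WithLp.equiv 2 (Fin n → ℝ)).symm (c • v)
    = c • (WithLp.equiv 2 (Fin n → ℝ)).symm v from rfl, norm_smul]
  simp [Real.norm_eq_abs]

lemma nv_le_sqrt {n : ℕ} {v : Fin n → ℝ} {c : ℝ} (h : v ⬝ᵥ v ≤ c) : nv v ≤ Real.sqrt c := by
  have := Real.sqrt_le_sqrt ((nv_sq v) ▸ h)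
  rwa [Real.sqrt_sq (nv_nonneg v)] at this

lemma sqrt_facts {N d : ℕ} {lam : ℝ} (hlam : 0 < lam) {Φ : Matrix (Fin N) (Fin d) ℝ}
    {S : Matrix (Fin d) (Fin d) ℝ} (hpsd : S.PosSemidef) (hSS : S * S = Lhat lam Φ) :
    Sᵀ = S ∧ S⁻¹ * S = 1 ∧ S * S⁻¹ = 1 ∧ (Lhat lam Φ)⁻¹ = S⁻¹ * S⁻¹ ∧
      S * (Lhat lam Φ)⁻¹ = S⁻¹ := by
  have hsym : Sᵀ = S := by
    have := hpsd.isHermitian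
    rwa [Matrix.IsHermitian, Matrix.conjTranspose_eq_transpose_of_trivial] at this
  have hdet : IsUnit S.det := by
    have h1 : S.det * S.det = (Lhat lam Φ).det := by rw [← Matrix.det_mul, hSS]
    have h2 : (Lhat lam Φ).det ≠ 0 := (lhat_posDef hlam Φ).det_pos.ne'
    exact isUnit_iff_ne_zero.mpr fun h => h2 (by rw [← h1, h, mul_zero])
  have hinvmul : S⁻¹ * S = 1 := Matrix.nonsing_inv_mul _ hdet
  have hmulinv : S * S⁻¹ = 1 := Matrix.mul_nonsing_inv _ hdet
  have hLinv : (Lhat lam Φ)⁻¹ = S⁻¹ * S⁻¹ := by rw [← hSS, Matrix.mul_inv_rev]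
  refine ⟨hsym, hinvmul, hmulinv, hLinv, ?_⟩
  rw [hLinv, ← Matrix.mul_assoc, hmulinv, Matrix.one_mul]

lemma step_norm {N d : ℕ} {lam : ℝ} (hlam : 0 < lam) (Φ : Matrix (Fin N) (Fin d) ℝ)
    (S : Matrix (Fin d) (Fin d) ℝ) (hpsd : S.PosSemidef) (hSS : S * S = Lhat lam Φ)
    (ξv : Fin N → ℝ) (θv : Fin d → ℝ) (u : Fin N → ℝ) (E F : ℝ)
    (hEb : ξv ⬝ᵥ ((Φ * (Lhat lam Φ)⁻¹ * Φᵀ) *ᵥ ξv) ≤ E)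
    (hFb : lam ^ 2 * (θv ⬝ᵥ ((Lhat lam Φ)⁻¹ *ᵥ θv)) ≤ F) :
    nv (S *ᵥ ((Lhat lam Φ)⁻¹ *ᵥ (Φᵀ *ᵥ ξv + Φᵀ *ᵥ u - lam • θv)))
      ≤ Real.sqrt E + Real.sqrt F + nv u := by
  obtain ⟨hsym, hinvmul, hmulinv, hLinv, hSL⟩ := sqrt_facts hlam hpsd hSS
  have hSTi : S⁻¹ᵀ = S⁻¹ := by rw [Matrix.transpose_nonsing_inv, hsym]
  set w : Fin d → ℝ := Φᵀ *ᵥ ξv + Φᵀ *ᵥ u - lam • θv with hw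
  have h0 : S *ᵥ ((Lhat lam Φ)⁻¹ *ᵥ w) = S⁻¹ *ᵥ w := by
    rw [Matrix.mulVec_mulVec, hSL]
  rw [h0, hw, Matrix.mulVec_sub, Matrix.mulVec_add]
  -- key squared identity for terms of the form S⁻¹ Φᵀ z
  have hsq : ∀ z : Fin N → ℝ, (S⁻¹ *ᵥ (Φᵀ *ᵥ z)) ⬝ᵥ (S⁻¹ *ᵥ (Φᵀ *ᵥ z))
      = z ⬝ᵥ ((Φ * (Lhat lam Φ)⁻¹ * Φᵀ) *ᵥ z) := by
    intro z
    rw [Matrix.mulVec_mulVec, dot_self_mulVec]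
    congr 2
    rw [Matrix.transpose_mul, hSTi, Matrix.transpose_transpose, hLinv]
    simp only [Matrix.mul_assoc]
  have hA : nv (S⁻¹ *ᵥ (Φᵀ *ᵥ ξv)) ≤ Real.sqrt E :=
    nv_le_sqrt (by rw [hsq]; exact hEb)
  have hB : nv (S⁻¹ *ᵥ (Φᵀ *ᵥ u)) ≤ nv u := by
    have h1 : (S⁻¹ *ᵥ (Φᵀ *ᵥ u)) ⬝ᵥ (S⁻¹ *ᵥ (Φᵀ *ᵥ u)) ≤ nv u ^ 2 := by
      rw [hsq, ← nv_sq]; exact contraction hlam Φ u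
    have := Real.sqrt_le_sqrt ((nv_sq _) ▸ h1)
    rwa [Real.sqrt_sq (nv_nonneg _), Real.sqrt_sq (nv_nonneg _)] at this
  have hC : nv (S⁻¹ *ᵥ (lam • θv)) ≤ Real.sqrt F := by
    apply nv_le_sqrt
    rw [Matrix.mulVec_smul, dotProduct_smul, smul_dotProduct]
    have h2 : (S⁻¹ *ᵥ θv) ⬝ᵥ (S⁻¹ *ᵥ θv) = θv ⬝ᵥ ((Lhat lam Φ)⁻¹ *ᵥ θv) := by
      rw [dot_self_mulVec, hSTi, ← hLinv]
    rw [smul_eq_mul, smul_eq_mul, h2, ← mul_assoc, ← pow_two]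
    exact hFb
  calc nv (S⁻¹ *ᵥ (Φᵀ *ᵥ ξv) + S⁻¹ *ᵥ (Φᵀ *ᵥ u) - S⁻¹ *ᵥ (lam • θv))
      ≤ nv (S⁻¹ *ᵥ (Φᵀ *ᵥ ξv) + S⁻¹ *ᵥ (Φᵀ *ᵥ u)) + nv (S⁻¹ *ᵥ (lam • θv)) :=
        nv_sub_le _ _
    _ ≤ nv (S⁻¹ *ᵥ (Φᵀ *ᵥ ξv)) + nv (S⁻¹ *ᵥ (Φᵀ *ᵥ u)) + nv (S⁻¹ *ᵥ (lam • θv)) := by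
        have := nv_add_le (S⁻¹ *ᵥ (Φᵀ *ᵥ ξv)) (S⁻¹ *ᵥ (Φᵀ *ᵥ u)); linarith
    _ ≤ Real.sqrt E + Real.sqrt F + nv u := by linarith

lemma eps_eq {N d : ℕ} {lam : ℝ} (hlam : 0 < lam) (Φ Φb : Matrix (Fin N) (Fin d) ℝ)
    (rv ξv : Fin N → ℝ) (θv θn θh θhn : Fin d → ℝ)
    (hre : rv + Φb *ᵥ θn = Φ *ᵥ θv + ξv)
    (hth : θh = (Lhat lam Φ)⁻¹ *ᵥ (Φᵀ *ᵥ (rv + Φb *ᵥ θhn))) :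
    θh - θv = (Lhat lam Φ)⁻¹ *ᵥ
      (Φᵀ *ᵥ ξv + Φᵀ *ᵥ (Φb *ᵥ (θhn - θn)) - lam • θv) := by
  have h1 : rv + Φb *ᵥ θhn = Φ *ᵥ θv + ξv + Φb *ᵥ (θhn - θn) := by
    rw [Matrix.mulVec_sub, ← hre]; abel
  have h2 : Lhat lam Φ *ᵥ θv = Φᵀ *ᵥ (Φ *ᵥ θv) + lam • θv := by
    rw [Matrix.mulVec_mulVec]
    show (Φᵀ * Φ + lam • 1) *ᵥ θv = _
    rw [Matrix.add_mulVec, Matrix.smul_mulVec, Matrix.one_mulVec]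
  have h2' : Φᵀ *ᵥ (Φ *ᵥ θv) = Lhat lam Φ *ᵥ θv - lam • θv := by rw [h2]; abel
  have h3 : (Lhat lam Φ)⁻¹ *ᵥ (Lhat lam Φ *ᵥ θv) = θv := by
    rw [Matrix.mulVec_mulVec, lhat_inv_mul hlam, Matrix.one_mulVec]
  have h4 : Φᵀ *ᵥ (Φ *ᵥ θv + ξv + Φb *ᵥ (θhn - θn))
      = Lhat lam Φ *ᵥ θv + (Φᵀ *ᵥ ξv + Φᵀ *ᵥ (Φb *ᵥ (θhn - θn)) - lam • θv) := by
    simp only [Matrix.mulVec_add, h2']; abel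
  rw [hth, h1, h4, Matrix.mulVec_add, h3]; abel

lemma Icc_succ_split {a b : ℕ} (hab : a ≤ b) :
    Finset.Icc a b = insert a (Finset.Icc (a + 1) b) := by
  rw [Finset.Icc_add_one_left_eq_Ioc, Finset.Ioc_insert_left hab]

lemma not_mem_Icc_succ {a b : ℕ} : a ∉ Finset.Icc (a + 1) b := by
  simp only [Finset.mem_Icc]; omega

/-- Deterministic core of Theorem 5.1. Under the LSPE setup, if `Λ̄₁` is positive semidefinite
with `‖Λ̂₁^{-1/2} Λ̄₁ Λ̂₁^{-1/2}‖₂ ≤ α`, if `‖Λ̂_h^{-1/2} Φ̄_hᵀ Φ̄_h Λ̂_h^{-1/2}‖₂ ≤ B_h` for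
`h ∈ {2,…,H}` with `B_h ≥ 0`, and if `ξ_hᵀ Φ_h Λ̂_h⁻¹ Φ_hᵀ ξ_h ≤ E` and
`λ² θ_hᵀ Λ̂_h⁻¹ θ_h ≤ F` for `h ∈ {1,…,H}` with `E, F ≥ 0`, then
`(θ̂₁ - θ₁)ᵀ Λ̄₁ (θ̂₁ - θ₁) ≤ 2 H α ∑_{h=1}^H (∏_{h'=2}^h B_{h'}) (E + F)`.
Here `S h` denotes the positive semidefinite square root `Λ̂_h^{1/2}`. -/
theorem stmt9 (N d H : ℕ) (hH : 1 ≤ H) (lam : ℝ) (hlam : 0 < lam)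
    (Φ Φbar : ℕ → Matrix (Fin N) (Fin d) ℝ) (r ξ : ℕ → Fin N → ℝ)
    (θ θhat : ℕ → Fin d → ℝ)
    (hΦbar : Φbar (H + 1) = 0) (hθ : θ (H + 1) = 0)
    (hreal : ∀ h, 1 ≤ h → h ≤ H →
      r h + Φbar (h + 1) *ᵥ θ (h + 1) = Φ h *ᵥ θ h + ξ h)
    (hθhat0 : θhat (H + 1) = 0)
    (hθhat : ∀ h, 1 ≤ h → h ≤ H →
      θhat h = (Lhat lam (Φ h))⁻¹ *ᵥ ((Φ h)ᵀ *ᵥ (r h + Φbar (h + 1) *ᵥ θhat (h + 1))))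
    (S : ℕ → Matrix (Fin d) (Fin d) ℝ)
    (hS : ∀ h, 1 ≤ h → h ≤ H → (S h).PosSemidef ∧ S h * S h = Lhat lam (Φ h))
    (Λbar1 : Matrix (Fin d) (Fin d) ℝ) (hΛbar1 : Λbar1.PosSemidef)
    (α : ℝ) (hα : sNorm ((S 1)⁻¹ * Λbar1 * (S 1)⁻¹) ≤ α)
    (B : ℕ → ℝ) (hB0 : ∀ h, 2 ≤ h → h ≤ H → 0 ≤ B h)
    (hB : ∀ h, 2 ≤ h → h ≤ H →
      sNorm ((S h)⁻¹ * ((Φbar h)ᵀ * Φbar h) * (S h)⁻¹) ≤ B h)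
    (E F : ℝ) (hE0 : 0 ≤ E) (hF0 : 0 ≤ F)
    (hE : ∀ h, 1 ≤ h → h ≤ H →
      ξ h ⬝ᵥ ((Φ h * (Lhat lam (Φ h))⁻¹ * (Φ h)ᵀ) *ᵥ ξ h) ≤ E)
    (hF : ∀ h, 1 ≤ h → h ≤ H →
      lam ^ 2 * (θ h ⬝ᵥ ((Lhat lam (Φ h))⁻¹ *ᵥ θ h)) ≤ F) :
    (θhat 1 - θ 1) ⬝ᵥ (Λbar1 *ᵥ (θhat 1 - θ 1)) ≤
      2 * H * α * ∑ h ∈ Finset.Icc 1 H, (∏ h' ∈ Finset.Icc 2 h, B h') * (E + F) := by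
  have hα0 : 0 ≤ α := le_trans (norm_nonneg _) hα
  set c : ℝ := Real.sqrt E + Real.sqrt F with hc
  have hc0 : 0 ≤ c := by positivity
  -- single-step recursion bound
  have step : ∀ h, 1 ≤ h → h ≤ H →
      nv (S h *ᵥ (θhat h - θ h)) ≤
        c + nv (Φbar (h + 1) *ᵥ (θhat (h + 1) - θ (h + 1))) := by
    intro h h1 h2
    obtain ⟨hpsd, hSS⟩ := hS h h1 h2
    have heps := eps_eq hlam (Φ h) (Φbar (h + 1)) (r h) (ξ h) (θ h) (θ (h + 1))
      (θhat h) (θhat (h + 1)) (hreal h h1 h2) (hθhat h h1 h2)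
    rw [heps]
    exact step_norm hlam (Φ h) (S h) hpsd hSS (ξ h) (θ h)
      (Φbar (h + 1) *ᵥ (θhat (h + 1) - θ (h + 1))) E F (hE h h1 h2) (hF h h1 h2)
  -- backward induction bound
  have key : ∀ t h, 1 ≤ h → h + t = H →
      nv (S h *ᵥ (θhat h - θ h)) ≤
        ∑ k ∈ Finset.Icc h H, Real.sqrt (∏ h' ∈ Finset.Icc (h + 1) k, B h') * c := by
    intro t
    induction t with
    | zero =>
      intro h h1 hh
      have hhH : h = H := by omega
      subst hhH
      have hst := step h h1 le_rfl
      rw [hΦbar, Matrix.zero_mulVec, nv_zero] at hst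
      rw [Finset.Icc_self, Finset.sum_singleton,
        Finset.Icc_eq_empty (by omega : ¬ h + 1 ≤ h), Finset.prod_empty, Real.sqrt_one,
        one_mul]
      linarith
    | succ t ih =>
      intro h h1 hh
      have h2 : h ≤ H := by omega
      have h1' : 1 ≤ h + 1 := by omega
      have h2' : h + 1 ≤ H := by omega
      have ihh := ih (h + 1) h1' (by omega)
      obtain ⟨hpsd', hSS'⟩ := hS (h + 1) h1' h2'
      have hB1 : 0 ≤ B (h + 1) := hB0 (h + 1) (by omega) h2'
      set ε : Fin d → ℝ := θhat (h + 1) - θ (h + 1) with hεdef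
      have hu : nv (Φbar (h + 1) *ᵥ ε) ≤
          Real.sqrt (B (h + 1)) * nv (S (h + 1) *ᵥ ε) := by
        obtain ⟨hsym, hinvmul, _, _, _⟩ := sqrt_facts hlam hpsd' hSS'
        have e1 : (Φbar (h + 1) *ᵥ ε) ⬝ᵥ (Φbar (h + 1) *ᵥ ε)
            = ε ⬝ᵥ (((Φbar (h + 1))ᵀ * Φbar (h + 1)) *ᵥ ε) := dot_self_mulVec _ _
        have e2 := qf_conj (S := S (h + 1)) (M := (Φbar (h + 1))ᵀ * Φbar (h + 1))
          hsym hinvmul ε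
        have e3 := qf_le_sNorm
          ((S (h + 1))⁻¹ * ((Φbar (h + 1))ᵀ * Φbar (h + 1)) * (S (h + 1))⁻¹)
          (S (h + 1) *ᵥ ε)
        have e4 := hB (h + 1) (by omega) h2'
        have e6 : (Φbar (h + 1) *ᵥ ε) ⬝ᵥ (Φbar (h + 1) *ᵥ ε)
            ≤ B (h + 1) * nv (S (h + 1) *ᵥ ε) ^ 2 := by
          rw [e1, e2]
          calc (S (h+1) *ᵥ ε) ⬝ᵥ
                (((S (h+1))⁻¹ * ((Φbar (h+1))ᵀ * Φbar (h+1)) * (S (h+1))⁻¹) *ᵥ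
                  (S (h+1) *ᵥ ε))
              ≤ sNorm ((S (h+1))⁻¹ * ((Φbar (h+1))ᵀ * Φbar (h+1)) * (S (h+1))⁻¹) *
                ((S (h+1) *ᵥ ε) ⬝ᵥ (S (h+1) *ᵥ ε)) := e3
            _ ≤ B (h + 1) * nv (S (h + 1) *ᵥ ε) ^ 2 := by
                rw [nv_sq]
                exact mul_le_mul_of_nonneg_right e4 (by positivity)
        have e7 := nv_le_sqrt e6
        rwa [Real.sqrt_mul hB1, Real.sqrt_sq (nv_nonneg _)] at e7
      have hsB : 0 ≤ Real.sqrt (B (h + 1)) := Real.sqrt_nonneg _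
      calc nv (S h *ᵥ (θhat h - θ h))
          ≤ c + nv (Φbar (h + 1) *ᵥ ε) := step h h1 h2
        _ ≤ c + Real.sqrt (B (h + 1)) * nv (S (h + 1) *ᵥ ε) := by linarith
        _ ≤ c + Real.sqrt (B (h + 1)) *
            (∑ k ∈ Finset.Icc (h + 1) H,
              Real.sqrt (∏ h' ∈ Finset.Icc (h + 2) k, B h') * c) := by
            have := mul_le_mul_of_nonneg_left ihh hsB
            linarith
        _ = ∑ k ∈ Finset.Icc h H,
              Real.sqrt (∏ h' ∈ Finset.Icc (h + 1) k, B h') * c := by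
            rw [Finset.mul_sum]
            have hterm : ∀ k ∈ Finset.Icc (h + 1) H,
                Real.sqrt (B (h + 1)) *
                  (Real.sqrt (∏ h' ∈ Finset.Icc (h + 2) k, B h') * c)
                = Real.sqrt (∏ h' ∈ Finset.Icc (h + 1) k, B h') * c := by
              intro k hk
              have hk1 : h + 1 ≤ k := (Finset.mem_Icc.mp hk).1
              have hsplit : (∏ h' ∈ Finset.Icc (h + 1) k, B h')
                  = B (h + 1) * ∏ h' ∈ Finset.Icc (h + 2) k, B h' := by
                rw [Icc_succ_split hk1, Finset.prod_insert not_mem_Icc_succ]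
              rw [hsplit, Real.sqrt_mul hB1, mul_assoc]
            rw [Finset.sum_congr rfl hterm, Icc_succ_split h2,
              Finset.sum_insert not_mem_Icc_succ,
              Finset.Icc_eq_empty (by omega : ¬ h + 1 ≤ h), Finset.prod_empty,
              Real.sqrt_one, one_mul]
  -- apply at h = 1
  have hkey1 := key (H - 1) 1 le_rfl (by omega)
  set D : ℝ := ∑ k ∈ Finset.Icc 1 H, Real.sqrt (∏ h' ∈ Finset.Icc 2 k, B h') * c with hD
  have hD0 : 0 ≤ D := by
    apply Finset.sum_nonneg
    intro k _
    positivity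
  -- prod nonneg
  have hprod : ∀ k ∈ Finset.Icc 1 H, 0 ≤ ∏ h' ∈ Finset.Icc 2 k, B h' := by
    intro k hk
    apply Finset.prod_nonneg
    intro h' hh'
    obtain ⟨l1, l2⟩ := Finset.mem_Icc.mp hh'
    exact hB0 h' l1 (le_trans l2 (Finset.mem_Icc.mp hk).2)
  -- conjugate the target quadratic form
  obtain ⟨hpsd1, hSS1⟩ := hS 1 le_rfl hH
  obtain ⟨hsym1, hinvmul1, _, _, _⟩ := sqrt_facts hlam hpsd1 hSS1
  have hconj := qf_conj (S := S 1) (M := Λbar1) hsym1 hinvmul1 (θhat 1 - θ 1)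
  have hQF := qf_le_sNorm ((S 1)⁻¹ * Λbar1 * (S 1)⁻¹) (S 1 *ᵥ (θhat 1 - θ 1))
  have hc2 : c ^ 2 ≤ 2 * (E + F) := by
    rw [hc]
    nlinarith [Real.sq_sqrt hE0, Real.sq_sqrt hF0, sq_nonneg (Real.sqrt E - Real.sqrt F)]
  have hCS : D ^ 2 ≤ (H : ℝ) * ∑ k ∈ Finset.Icc 1 H,
      (∏ h' ∈ Finset.Icc 2 k, B h') * (2 * (E + F)) := by
    calc D ^ 2 ≤ ((Finset.Icc 1 H).card : ℝ) *
        ∑ k ∈ Finset.Icc 1 H,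
          (Real.sqrt (∏ h' ∈ Finset.Icc 2 k, B h') * c) ^ 2 :=
        sq_sum_le_card_mul_sum_sq
      _ ≤ (H : ℝ) * ∑ k ∈ Finset.Icc 1 H,
          (∏ h' ∈ Finset.Icc 2 k, B h') * (2 * (E + F)) := by
        rw [Nat.card_Icc]
        simp only [Nat.add_sub_cancel]
        apply mul_le_mul_of_nonneg_left _ (by positivity)
        apply Finset.sum_le_sum
        intro k hk
        rw [mul_pow, Real.sq_sqrt (hprod k hk)]
        exact mul_le_mul_of_nonneg_left hc2 (hprod k hk)
  have hy2 : nv (S 1 *ᵥ (θhat 1 - θ 1)) ^ 2 ≤ D ^ 2 :=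
    pow_le_pow_left₀ (nv_nonneg _) hkey1 2
  have hsum2 : ∑ k ∈ Finset.Icc 1 H, (∏ h' ∈ Finset.Icc 2 k, B h') * (2 * (E + F))
      = 2 * ∑ k ∈ Finset.Icc 1 H, (∏ h' ∈ Finset.Icc 2 k, B h') * (E + F) := by
    rw [Finset.mul_sum]
    exact Finset.sum_congr rfl fun k _ => by ring
  calc (θhat 1 - θ 1) ⬝ᵥ (Λbar1 *ᵥ (θhat 1 - θ 1))
      = (S 1 *ᵥ (θhat 1 - θ 1)) ⬝ᵥ
          (((S 1)⁻¹ * Λbar1 * (S 1)⁻¹) *ᵥ (S 1 *ᵥ (θhat 1 - θ 1))) := hconj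
    _ ≤ sNorm ((S 1)⁻¹ * Λbar1 * (S 1)⁻¹) *
          ((S 1 *ᵥ (θhat 1 - θ 1)) ⬝ᵥ (S 1 *ᵥ (θhat 1 - θ 1))) := hQF
    _ ≤ α * nv (S 1 *ᵥ (θhat 1 - θ 1)) ^ 2 := by
        rw [nv_sq]
        exact mul_le_mul_of_nonneg_right hα (by positivity)
    _ ≤ α * D ^ 2 := mul_le_mul_of_nonneg_left hy2 hα0
    _ ≤ α * ((H : ℝ) * ∑ k ∈ Finset.Icc 1 H,
          (∏ h' ∈ Finset.Icc 2 k, B h') * (2 * (E + F))) :=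
        mul_le_mul_of_nonneg_left hCS hα0
    _ = 2 * H * α * ∑ h ∈ Finset.Icc 1 H, (∏ h' ∈ Finset.Icc 2 h, B h') * (E + F) := by
        rw [hsum2]; ring
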